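/- arXiv:1810.05473 — 2 statements merged into one kernel-verified Lean document; each statement's English description precedes it below -/
import Mathlib

section
/- Let K be a positive integer, λ, ν, μ > 0, and define p(q,z) = p_Q(q) · C(q,z) · (μ/(ν+μ))^{q-z} · (ν/(ν+μ))^z for 0 ≤ z ≤ q ≤ K, where p_Q(q) = (1/q!)(λ/ν)^q · p_Q(0) and p_Q(0) = (Σ_{i=0}^K (1/i!)(λ/ν)^i)^{-1}. Then for all (q,z) with 0 < q < K, 0 < z < q, p satisfies the balance equation (qν + λ + μz) p(q,z) = λ p(q-1,z-1) + (z+1)ν p(q+1,z+1) + μ(z+1) p(q,z+1) + (q-z+1)ν p(q+1,z). -/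
set_option maxRecDepth 4000
set_option maxHeartbeats 2000000

open Finset

theorem heKey (lam ν μ S M F : ℝ) (hν : ν ≠ 0) (hνμ : ν + μ ≠ 0) (hF : F ≠ 0)
    (h1 : S+M+1 ≠ 0) (h2 : S+M+2 ≠ 0) (h3 : S+M+3 ≠ 0) (hs2 : S+2 ≠ 0) (hm2 : M+2 ≠ 0) :
    ((S+M+2)*ν + lam + μ*(S+1)) * (1/((S+M+2)*((S+M+1)*F)) * ((lam/ν)*(lam/ν)) * (μ/(ν+μ)) * (ν/(ν+μ)))
      = lam * (1/((S+M+1)*F) * (lam/ν) * ((S+1)/(S+M+2)) * (μ/(ν+μ)))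
      + ((S+1)+1)*ν * (1/((S+M+3)*((S+M+2)*((S+M+1)*F))) * ((lam/ν)^3) * ((S+M+3)/(S+2)) * (μ/(ν+μ)) * ((ν/(ν+μ))^2))
      + μ*((S+1)+1) * (1/((S+M+2)*((S+M+1)*F)) * ((lam/ν)^2) * ((M+1)/(S+2)) * ((ν/(ν+μ))^2))
      + ((S+M+2)-(S+1)+1)*ν * (1/((S+M+3)*((S+M+2)*((S+M+1)*F))) * ((lam/ν)^3) * ((S+M+3)/(M+2)) * ((μ/(ν+μ))^2) * (ν/(ν+μ))) := by
  have e0 : ((S+M+2)*ν + lam + μ*(S+1)) * (1/((S+M+2)*((S+M+1)*F)) * ((lam/ν)*(lam/ν)) * (μ/(ν+μ)) * (ν/(ν+μ)))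
      = ((S+M+2)*ν + lam + μ*(S+1)) * (lam^2*μ*(ν+μ)) / (ν*(ν+μ)^3*((S+M+2)*((S+M+1)*F))) := by
    field_simp
  have e1 : lam * (1/((S+M+1)*F) * (lam/ν) * ((S+1)/(S+M+2)) * (μ/(ν+μ)))
      = lam^2*μ*(S+1)*(ν+μ)^2 / (ν*(ν+μ)^3*((S+M+2)*((S+M+1)*F))) := by
    field_simp
  have e2 : ((S+1)+1)*ν * (1/((S+M+3)*((S+M+2)*((S+M+1)*F))) * ((lam/ν)^3) * ((S+M+3)/(S+2)) * (μ/(ν+μ)) * ((ν/(ν+μ))^2))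
      = lam^3*μ*ν / (ν*(ν+μ)^3*((S+M+2)*((S+M+1)*F))) := by
    field_simp; ring
  have e3 : μ*((S+1)+1) * (1/((S+M+2)*((S+M+1)*F)) * ((lam/ν)^2) * ((M+1)/(S+2)) * ((ν/(ν+μ))^2))
      = μ*(M+1)*lam^2*ν*(ν+μ) / (ν*(ν+μ)^3*((S+M+2)*((S+M+1)*F))) := by
    field_simp; ring
  have e4 : ((S+M+2)-(S+1)+1)*ν * (1/((S+M+3)*((S+M+2)*((S+M+1)*F))) * ((lam/ν)^3) * ((S+M+3)/(M+2)) * ((μ/(ν+μ))^2) * (ν/(ν+μ)))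
      = lam^3*μ^2 / (ν*(ν+μ)^3*((S+M+2)*((S+M+1)*F))) := by
    field_simp; ring
  rw [e0, e1, e2, e3, e4, ← add_div, ← add_div, ← add_div]
  exact congrArg (· / (ν*(ν+μ)^3*((S+M+2)*((S+M+1)*F)))) (by ring)

theorem stmt0 (K : ℕ) (hK : 0 < K) (lam ν μ : ℝ)
    (hlam : 0 < lam) (hν : 0 < ν) (hμ : 0 < μ)
    (pQ : ℕ → ℝ)
    (hpQ0 : pQ 0 = (∑ i ∈ Finset.range (K + 1), (1 / (i.factorial : ℝ)) * (lam / ν) ^ i)⁻¹)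
    (hpQ : ∀ q : ℕ, pQ q = (1 / (q.factorial : ℝ)) * (lam / ν) ^ q * pQ 0)
    (p : ℕ → ℕ → ℝ)
    (hp : ∀ q z : ℕ, p q z =
      pQ q * (q.choose z : ℝ) * (μ / (ν + μ)) ^ (q - z) * (ν / (ν + μ)) ^ z) :
    ∀ q z : ℕ, 0 < q → q < K → 0 < z → z < q →
      ((q : ℝ) * ν + lam + μ * z) * p q z =
        lam * p (q - 1) (z - 1) + ((z : ℝ) + 1) * ν * p (q + 1) (z + 1)
          + μ * ((z : ℝ) + 1) * p q (z + 1) + ((q : ℝ) - z + 1) * ν * p (q + 1) z := by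
  intro q z hq hqK hz hzq
  obtain ⟨s, rfl⟩ : ∃ s, z = s + 1 := ⟨z - 1, by omega⟩
  obtain ⟨m, rfl⟩ : ∃ m, q = s + 1 + m + 1 := ⟨q - (s + 1) - 1, by omega⟩
  rw [hp, hp, hp, hp, hp, hpQ (s+1+m+1), hpQ (s+1+m+1-1), hpQ (s+1+m+1+1)]
  simp only [show s+1+m+1 = s+m+2 by omega, show s+m+2-1 = s+m+1 by omega,
    show s+m+2+1 = s+m+3 by omega, show s+1+1 = s+2 by omega, show s+1-1 = s by omega,
    show s+m+2-(s+1) = m+1 by omega, show s+m+1-s = m+1 by omega,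
    show s+m+3-(s+2) = m+1 by omega, show s+m+2-(s+2) = m by omega,
    show s+m+3-(s+1) = m+2 by omega]
  have hs2 : ((s:ℝ)+2) ≠ 0 := by positivity
  have hm2 : ((m:ℝ)+2) ≠ 0 := by positivity
  have hq2 : ((s:ℝ)+(m:ℝ)+2) ≠ 0 := by positivity
  have c1 : (((s+m+1).choose s : ℕ) : ℝ)
      = (((s+m+2).choose (s+1) : ℕ) : ℝ) * ((s:ℝ)+1) / ((s:ℝ)+(m:ℝ)+2) := by
    have h := congrArg (Nat.cast : ℕ → ℝ) (Nat.add_one_mul_choose_eq (s+m+1) s)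
    simp only [Nat.succ_eq_add_one, show s+m+1+1 = s+m+2 by omega] at h
    push_cast at h
    rw [eq_div_iff hq2]
    first | linear_combination h | linear_combination -h
  have c2 : (((s+m+3).choose (s+2) : ℕ) : ℝ)
      = (((s+m+2).choose (s+1) : ℕ) : ℝ) * ((s:ℝ)+(m:ℝ)+3) / ((s:ℝ)+2) := by
    have h := congrArg (Nat.cast : ℕ → ℝ) (Nat.add_one_mul_choose_eq (s+m+2) (s+1))
    simp only [Nat.succ_eq_add_one, show s+m+2+1 = s+m+3 by omega, show s+1+1 = s+2 by omega] at h
    push_cast at h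
    rw [eq_div_iff hs2]
    first | linear_combination h | linear_combination -h
  have c3 : (((s+m+2).choose (s+2) : ℕ) : ℝ)
      = (((s+m+2).choose (s+1) : ℕ) : ℝ) * ((m:ℝ)+1) / ((s:ℝ)+2) := by
    have h0 := Nat.choose_succ_right_eq (s+m+2) (s+1)
    rw [show s+m+2-(s+1) = m+1 by omega] at h0
    have h := congrArg (Nat.cast : ℕ → ℝ) h0
    push_cast at h
    rw [eq_div_iff hs2]
    first | linear_combination h | linear_combination -h
  have c4 : (((s+m+3).choose (s+1) : ℕ) : ℝ)
      = (((s+m+2).choose (s+1) : ℕ) : ℝ) * ((s:ℝ)+(m:ℝ)+3) / ((m:ℝ)+2) := by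
    have h0 := Nat.choose_succ_right_eq (s+m+3) (s+1)
    rw [show s+m+3-(s+1) = m+2 by omega] at h0
    rw [show s+1+1 = s+2 by omega] at h0
    have h := congrArg (Nat.cast : ℕ → ℝ) h0
    push_cast at h
    rw [c2] at h
    field_simp at h
    rw [eq_div_iff hm2]
    first | linear_combination h | linear_combination -h
  rw [c1, c2, c3, c4]
  simp only [Nat.factorial_succ, pow_succ]
  push_cast
  have hνμ : ν + μ ≠ 0 := by positivity
  have hν' : ν ≠ 0 := ne_of_gt hν
  have f1 : ((s+m).factorial : ℝ) ≠ 0 := Nat.cast_ne_zero.mpr (Nat.factorial_ne_zero _)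
  generalize hX : (lam / ν) ^ (s + m) = X
  generalize hY : (μ / (ν + μ)) ^ m = Y
  generalize hZ : (ν / (ν + μ)) ^ s = Z
  generalize hF : ((s + m).factorial : ℝ) = F at f1
  generalize hc : (((s+m+2).choose (s+1) : ℕ) : ℝ) = c
  have hD1 : ((s:ℝ)+(m:ℝ)+1) ≠ 0 := by positivity
  have hD2 : ((s:ℝ)+(m:ℝ)+2) ≠ 0 := by positivity
  have hD3 : ((s:ℝ)+(m:ℝ)+3) ≠ 0 := by positivity
  have hE := heKey lam ν μ (s:ℝ) (m:ℝ) F hν' hνμ f1 hD1 hD2 hD3 hs2 hm2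
  linear_combination (pQ 0 * X * Y * Z * c) * hE
end

section
/- Let λ, ν, μ, M, K > 0 with M ≤ K, let z* be the unique invariant point of the ODE z'(t) = (λ ∧ νK) − νz(t) − μ(z(t) ∧ M), and let z(·) be the solution with z(0) ∈ [0,K]. Then z(t) → z* as t → ∞, and the convergence is exponentially fast: there exists C > 0 such that |z(t) − z*| ≤ C e^{−νt} for all t sufficiently large. -/
open Filter

theorem stmt10 (lam ν μ M K : ℝ)
    (hlam : 0 < lam) (hν : 0 < ν) (hμ : 0 < μ) (hM : 0 < M) (hK : 0 < K) (hMK : M ≤ K)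
    (z : ℝ → ℝ)
    (hode : ∀ t : ℝ, 0 ≤ t →
      HasDerivAt z (min lam (ν * K) - ν * z t - μ * min (z t) M) t)
    (h0 : z 0 ∈ Set.Icc (0 : ℝ) K) :
    let zs : ℝ := if min lam (ν * K) / (ν + μ) ≤ M
      then min lam (ν * K) / (ν + μ) else (min lam (ν * K) - μ * M) / ν
    Tendsto z atTop (nhds zs) ∧
      ∃ C : ℝ, 0 < C ∧ ∃ T : ℝ, ∀ t : ℝ, T ≤ t → |z t - zs| ≤ C * Real.exp (-ν * t) := by
  intro zs
  set A : ℝ := min lam (ν * K) with hA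
  have hνμ : 0 < ν + μ := by linarith
  -- equilibrium equation
  have heq : A - ν * zs - μ * min zs M = 0 := by
    by_cases hc : A / (ν + μ) ≤ M
    · have hzs : zs = A / (ν + μ) := if_pos hc
      have hmin : min zs M = zs := min_eq_left (by rw [hzs]; exact hc)
      rw [hmin, hzs]
      field_simp
      ring
    · have hzs : zs = (A - μ * M) / ν := if_neg hc
      push_neg at hc
      have hA' : (ν + μ) * M < A := by
        rw [lt_div_iff₀ hνμ] at hc; linarith
      have hMzs : M ≤ zs := by
        rw [hzs, le_div_iff₀ hν]; nlinarith
      have hmin : min zs M = M := min_eq_right hMzs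
      rw [hmin, hzs]
      field_simp
      ring
  -- Lyapunov function
  set g : ℝ → ℝ := fun t => (z t - zs) ^ 2 * Real.exp (2 * ν * t) with hg
  have hgderiv : ∀ t : ℝ, 0 ≤ t →
      HasDerivAt g ((2 * (z t - zs) * (A - ν * z t - μ * min (z t) M)) * Real.exp (2 * ν * t)
        + (z t - zs) ^ 2 * (Real.exp (2 * ν * t) * (2 * ν))) t := by
    intro t ht
    have h1 : HasDerivAt (fun t => (z t - zs) ^ 2)
        (2 * (z t - zs) * (A - ν * z t - μ * min (z t) M)) t := by
      have := ((hode t ht).sub_const zs).fun_pow 2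
      simpa [mul_comm, mul_assoc, mul_left_comm] using this
    have h2 : HasDerivAt (fun t : ℝ => Real.exp (2 * ν * t))
        (Real.exp (2 * ν * t) * (2 * ν)) t := by
      have hid : HasDerivAt (fun t : ℝ => 2 * ν * t) (2 * ν) t := by
        simpa using (hasDerivAt_id t).const_mul (2 * ν)
      simpa [mul_comm] using hid.exp
    exact h1.mul h2
  have hanti : AntitoneOn g (Set.Ici (0 : ℝ)) := by
    apply antitoneOn_of_deriv_nonpos (convex_Ici 0)
    · intro t ht
      exact ((hgderiv t ht).continuousAt).continuousWithinAt
    · intro t ht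
      rw [interior_Ici] at ht
      exact (hgderiv t (le_of_lt ht)).differentiableAt.differentiableWithinAt
    · intro t ht
      rw [interior_Ici] at ht
      rw [(hgderiv t (le_of_lt ht)).deriv]
      have hΔ : 0 ≤ (z t - zs) * (min (z t) M - min zs M) := by
        rcases le_total (z t) zs with h | h
        · have : min (z t) M ≤ min zs M := min_le_min h le_rfl
          have h2 := mul_nonneg (by linarith : (0:ℝ) ≤ zs - z t)
            (by linarith : (0:ℝ) ≤ min zs M - min (z t) M)
          nlinarith
        · have : min zs M ≤ min (z t) M := min_le_min h le_rfl
          exact mul_nonneg (by linarith) (by linarith)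
      have hrw : (2 * (z t - zs) * (A - ν * z t - μ * min (z t) M)) * Real.exp (2 * ν * t)
          + (z t - zs) ^ 2 * (Real.exp (2 * ν * t) * (2 * ν))
          = Real.exp (2 * ν * t) * (-(2 * μ) * ((z t - zs) * (min (z t) M - min zs M))) := by
        have hD : A - ν * z t - μ * min (z t) M
            = -ν * (z t - zs) - μ * (min (z t) M - min zs M) := by linarith
        rw [hD]; ring
      rw [hrw]
      apply mul_nonpos_of_nonneg_of_nonpos (Real.exp_pos _).le
      have : 0 ≤ (2 * μ) * ((z t - zs) * (min (z t) M - min zs M)) :=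
        mul_nonneg (by linarith) hΔ
      linarith
  -- the pointwise bound
  have hbound : ∀ t : ℝ, 0 ≤ t →
      |z t - zs| ≤ |z 0 - zs| * Real.exp (-ν * t) := by
    intro t ht
    have hgt : g t ≤ g 0 := hanti (Set.self_mem_Ici) ht ht
    have hg0 : g 0 = (z 0 - zs) ^ 2 := by simp [hg]
    have key : Real.exp (-ν * t) ^ 2 * Real.exp (2 * ν * t) = 1 := by
      rw [sq, ← Real.exp_add, ← Real.exp_add]
      rw [show -ν * t + -ν * t + 2 * ν * t = 0 by ring, Real.exp_zero]
    have hsq : (z t - zs) ^ 2 ≤ (|z 0 - zs| * Real.exp (-ν * t)) ^ 2 := by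
      have h1 : (z t - zs) ^ 2 * Real.exp (2 * ν * t) ≤ (z 0 - zs) ^ 2 := by
        rw [← hg0]; exact hgt
      have h2 := mul_le_mul_of_nonneg_right h1 (sq_nonneg (Real.exp (-ν * t)))
      have habs : |z 0 - zs| ^ 2 = (z 0 - zs) ^ 2 := sq_abs _
      nlinarith [key, h2]
    have := Real.sqrt_le_sqrt hsq
    rwa [Real.sqrt_sq_eq_abs, Real.sqrt_sq
      (mul_nonneg (abs_nonneg _) (Real.exp_pos _).le)] at this
  -- exponential decay with positive constant
  set C : ℝ := |z 0 - zs| + 1 with hC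
  have hCpos : 0 < C := by positivity
  have hbound' : ∀ t : ℝ, 0 ≤ t → |z t - zs| ≤ C * Real.exp (-ν * t) := by
    intro t ht
    refine (hbound t ht).trans ?_
    have : (0:ℝ) ≤ Real.exp (-ν * t) := (Real.exp_pos _).le
    nlinarith
  -- tendsto
  have hexp : Tendsto (fun t : ℝ => Real.exp (-ν * t)) atTop (nhds 0) := by
    apply Real.tendsto_exp_atBot.comp
    have : Tendsto (fun t : ℝ => -ν * t) atTop atBot := by
      apply Filter.Tendsto.const_mul_atTop_of_neg (by linarith : -ν < 0) tendsto_id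
    exact this
  have hCexp : Tendsto (fun t : ℝ => C * Real.exp (-ν * t)) atTop (nhds 0) := by
    simpa using hexp.const_mul C
  have htend0 : Tendsto (fun t => z t - zs) atTop (nhds 0) := by
    apply squeeze_zero_norm' _ hCexp
    filter_upwards [eventually_ge_atTop (0:ℝ)] with t ht
    simpa [Real.norm_eq_abs] using hbound' t ht
  constructor
  · have := htend0.add_const zs
    simpa using this
  · exact ⟨C, hCpos, 0, fun t ht => hbound' t ht⟩
end
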